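/- With the choices f(x_6,x_7) = κx_6 − x_6 x_7, w_6 = (1/2) x_6 x_7^2, F_6 = x_5^2/2, and u_6 = u_7 = t_7 = F_7 = G_7 = 0, the functions r_6 = x_3 f e^{w_6} + F_6, r_7 = x_1 (w_6)_{x_7} + 2√2 x_4 f, s_7 = x_2 (w_6)_{x_7} + f·(x_5 + κ^{-1} x_3) satisfy the full PDE system: (r_7)_{x_1} = (w_6)_{x_7}, (r_7)_{x_3} = √2(s_7)_{x_4}, (r_7)_{x_4} = 2√2(s_7)_{x_5}, (r_7)_{x_4} = 2√2 (r_6)_{x_3} e^{−w_6}, (r_7)_{x_5} = κ(r_7)_{x_3}, (r_7)_{x_5} = √2 (r_6)_{x_4} e^{−w_6}, (s_7)_{x_2} = (w_6)_{x_7}, (s_7)_{x_5} = κ(s_7)_{x_3}. -/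

import Mathlib

open Matrix Real

noncomputable section

/-- σ(z) : 2×3 matrix. -/
def sigM (z : Fin 4 → ℝ) : Matrix (Fin 2) (Fin 3) ℝ :=
  !![z 1, Real.sqrt 2 * z 2, z 3;
     z 0, Real.sqrt 2 * z 1, z 2]

/-- ρ(A) : 3×3 matrix. -/
def rhoM (A : Matrix (Fin 2) (Fin 2) ℝ) : Matrix (Fin 3) (Fin 3) ℝ :=
  !![A 0 0 - A 1 1, -(Real.sqrt 2) * A 0 1, 0;
     -(Real.sqrt 2) * A 1 0, 0, -(Real.sqrt 2) * A 0 1;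
     0, -(Real.sqrt 2) * A 1 0, -(A 0 0) + A 1 1]

/-- h(A,z,c) : the 7×7 block matrix [[A, σ(z), U(c)],[0, ρ(A), σ(z)^*],[0,0,−Aᵀ]]. -/
def hM (A : Matrix (Fin 2) (Fin 2) ℝ) (z : Fin 4 → ℝ) (c : ℝ) : Matrix (Fin 7) (Fin 7) ℝ :=
  !![A 0 0, A 0 1, z 1, Real.sqrt 2 * z 2, z 3, 0, -c;
     A 1 0, A 1 1, z 0, Real.sqrt 2 * z 1, z 2, c, 0;
     0, 0, A 0 0 - A 1 1, -(Real.sqrt 2) * A 0 1, 0, -(z 3), -(z 2);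
     0, 0, -(Real.sqrt 2) * A 1 0, 0, -(Real.sqrt 2) * A 0 1, Real.sqrt 2 * z 2, Real.sqrt 2 * z 1;
     0, 0, 0, -(Real.sqrt 2) * A 1 0, -(A 0 0) + A 1 1, -(z 1), -(z 0);
     0, 0, 0, 0, 0, -(A 0 0), -(A 1 0);
     0, 0, 0, 0, 0, -(A 0 1), -(A 1 1)]

/-- Gram matrix of g with g(b1,b6)=g(b2,b7)=g(b3,b5)=1, g(b4,b4)=−1. -/
def G1 : Matrix (Fin 7) (Fin 7) ℝ :=
  !![0,0,0,0,0,1,0;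
     0,0,0,0,0,0,1;
     0,0,0,0,1,0,0;
     0,0,0,-1,0,0,0;
     0,0,1,0,0,0,0;
     1,0,0,0,0,0,0;
     0,1,0,0,0,0,0]

/-- Gram matrix of ⟨x,y⟩ = 2(x1y6+x6y1+x2y7+x7y2+x3y5+x5y3) − x4y4. -/
def G2 : Matrix (Fin 7) (Fin 7) ℝ :=
  !![0,0,0,0,0,2,0;
     0,0,0,0,0,0,2;
     0,0,0,0,2,0,0;
     0,0,0,-1,0,0,0;
     0,0,2,0,0,0,0;
     2,0,0,0,0,0,0;
     0,2,0,0,0,0,0]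

/-- The 14-parameter family of matrices spanning 𝔤₂*. -/
def Mg (s : Fin 14 → ℝ) : Matrix (Fin 7) (Fin 7) ℝ :=
  !![s 0 + s 3, -(s 9), s 8, Real.sqrt 2 * s 5, -(s 11), 0, -(s 10);
     -(s 7), s 0, s 1, Real.sqrt 2 * s 8, s 5, s 10, 0;
     s 6, s 2, s 3, Real.sqrt 2 * s 9, 0, s 11, -(s 5);
     Real.sqrt 2 * s 4, Real.sqrt 2 * s 6, Real.sqrt 2 * s 7, 0, Real.sqrt 2 * s 9, Real.sqrt 2 * s 5, Real.sqrt 2 * s 8;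
     -(s 13), s 4, 0, Real.sqrt 2 * s 7, -(s 3), -(s 8), -(s 1);
     0, s 12, s 13, Real.sqrt 2 * s 4, -(s 6), -(s 0) - s 3, s 7;
     -(s 12), 0, -(s 4), Real.sqrt 2 * s 6, -(s 2), s 9, -(s 0)]

/-- standard basis vector b_i of ℝ^7. -/
def bb (i : Fin 7) : Fin 7 → ℝ := Pi.single i 1

/-- determinant of the (i,j,k)-coordinates of X,Y,Z : the value b^i∧b^j∧b^k (X,Y,Z). -/
def d3 (X Y Z : Fin 7 → ℝ) (i j k : Fin 7) : ℝ :=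
  Matrix.det !![X i, X j, X k; Y i, Y j, Y k; Z i, Z j, Z k]

/-- The generic 3-form ω = √2(−b^{157}+b^{236}) − b^4∧(b^{16}−b^{27}−b^{35}), as a
function of three vectors. -/
def om (X Y Z : Fin 7 → ℝ) : ℝ :=
  Real.sqrt 2 * (-(d3 X Y Z 0 4 6) + d3 X Y Z 1 2 5)
    - (d3 X Y Z 3 0 5 - d3 X Y Z 3 1 6 - d3 X Y Z 3 2 4)

/-- the value of α ∧ β ∧ γ (α,β 2-forms, γ a 3-form) on the standard basis of ℝ^7. -/
def wedge223 (α β : (Fin 7 → ℝ) → (Fin 7 → ℝ) → ℝ)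
    (γ : (Fin 7 → ℝ) → (Fin 7 → ℝ) → (Fin 7 → ℝ) → ℝ) : ℝ :=
  (1 / 24 : ℝ) * ∑ p : Equiv.Perm (Fin 7),
    ((Equiv.Perm.sign p : ℤ) : ℝ) * α (bb (p 0)) (bb (p 1)) * β (bb (p 2)) (bb (p 3))
      * γ (bb (p 4)) (bb (p 5)) (bb (p 6))

/-- the matrix of the third symmetric power of the standard representation of 𝔤𝔩(2,ℝ),
in the monomial basis (x³, x²y, xy², y³). -/
def sym3 (A : Matrix (Fin 2) (Fin 2) ℝ) : Matrix (Fin 4) (Fin 4) ℝ :=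
  !![3 * A 0 0, A 0 1, 0, 0;
     3 * A 1 0, 2 * A 0 0 + A 1 1, 2 * A 0 1, 0;
     0, 2 * A 1 0, A 0 0 + 2 * A 1 1, 3 * A 0 1;
     0, 0, A 1 0, 3 * A 1 1]

/-- partial derivative in the i-th coordinate direction. -/
def pd (i : Fin 7) (F : (Fin 7 → ℝ) → ℝ) (x : Fin 7 → ℝ) : ℝ :=
  fderiv ℝ F x (Pi.single i 1)

/-- w₆ = ½ x₆ x₇². (Coordinates x₁,…,x₇ are indexed 0,…,6.) -/
def w6 (x : Fin 7 → ℝ) : ℝ := (1 / 2) * x 5 * (x 6) ^ 2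

/-- f = κx₆ − x₆x₇. -/
def fK (κ : ℝ) (x : Fin 7 → ℝ) : ℝ := κ * x 5 - x 5 * x 6

/-- r₆ = x₃ f e^{w₆} + F₆ with F₆ = x₅²/2. -/
def r6B (κ : ℝ) (x : Fin 7 → ℝ) : ℝ :=
  x 2 * fK κ x * Real.exp (w6 x) + (x 4) ^ 2 / 2

/-- r₇ = x₁ (w₆)_{x₇} + 2√2 x₄ f. -/
def r7B (κ : ℝ) (x : Fin 7 → ℝ) : ℝ :=
  x 0 * (fderiv ℝ w6 x (Pi.single 6 1)) + 2 * Real.sqrt 2 * x 3 * fK κ x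

/-- s₇ = x₂ (w₆)_{x₇} + f(x₅ + κ⁻¹x₃). -/
def s7B (κ : ℝ) (x : Fin 7 → ℝ) : ℝ :=
  x 1 * (fderiv ℝ w6 x (Pi.single 6 1)) + fK κ x * (x 4 + κ⁻¹ * x 2)

abbrev pj (i : Fin 7) : (Fin 7 → ℝ) →L[ℝ] ℝ := ContinuousLinearMap.proj i

lemma hpj (i : Fin 7) (x : Fin 7 → ℝ) : HasFDerivAt (fun y : Fin 7 → ℝ => y i) (pj i) x :=
  hasFDerivAt_apply i x

lemma w6_eq : w6 = fun x : Fin 7 → ℝ => 1/2 * x 5 * (x 6 * x 6) := by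
  funext x; rw [w6]; ring

lemma w6deriv (x : Fin 7 → ℝ) : fderiv ℝ w6 x (Pi.single 6 1) = x 5 * x 6 := by
  have h := ((hpj 5 x).const_mul (1/2:ℝ)).mul ((hpj 6 x).mul (hpj 6 x))
  erw [w6_eq, h.fderiv]
  simp [Pi.single_apply]; ring

lemma pdw6 (x : Fin 7 → ℝ) : pd 6 w6 x = x 5 * x 6 := w6deriv x

lemma r7B_eq (κ : ℝ) : r7B κ = fun x : Fin 7 → ℝ =>
    x 0 * (x 5 * x 6) + 2 * Real.sqrt 2 * x 3 * fK κ x := by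
  funext y; rw [r7B, w6deriv]

lemma s7B_eq (κ : ℝ) : s7B κ = fun x : Fin 7 → ℝ =>
    x 1 * (x 5 * x 6) + fK κ x * (x 4 + κ⁻¹ * x 2) := by
  funext y; rw [s7B, w6deriv]

lemma r6B_eq (κ : ℝ) : r6B κ = fun x : Fin 7 → ℝ =>
    x 2 * (κ * x 5 - x 5 * x 6) * Real.exp (1/2 * x 5 * (x 6 * x 6)) + 1/2 * (x 4 * x 4) := by
  funext y; rw [r6B, fK, w6]
  rw [show (y 6 : ℝ)^2 = y 6 * y 6 from sq (y 6)]
  ring_nf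

lemma pdr7 (κ : ℝ) (i : Fin 7) (x : Fin 7 → ℝ) : pd i (r7B κ) x =
    (if i = 0 then x 5 * x 6 else 0) + (if i = 5 then x 0 * x 6 else 0)
    + (if i = 6 then x 0 * x 5 else 0)
    + (if i = 3 then 2 * Real.sqrt 2 * fK κ x else 0)
    + (if i = 5 then 2 * Real.sqrt 2 * x 3 * (κ - x 6) else 0)
    + (if i = 6 then -(2 * Real.sqrt 2 * x 3 * x 5) else 0) := by
  have h := ((hpj 0 x).mul ((hpj 5 x).mul (hpj 6 x))).add
    (((hpj 3 x).const_mul (2 * Real.sqrt 2)).mul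
      (((hpj 5 x).const_mul κ).sub ((hpj 5 x).mul (hpj 6 x))))
  rw [pd, r7B_eq]
  simp only [fK]
  erw [h.fderiv]
  fin_cases i <;> simp [Pi.single_apply, fK] <;> ring

lemma pds7 (κ : ℝ) (i : Fin 7) (x : Fin 7 → ℝ) : pd i (s7B κ) x =
    (if i = 1 then x 5 * x 6 else 0) + (if i = 4 then fK κ x else 0)
    + (if i = 2 then κ⁻¹ * fK κ x else 0)
    + (if i = 5 then x 1 * x 6 + (κ - x 6) * (x 4 + κ⁻¹ * x 2) else 0)
    + (if i = 6 then x 1 * x 5 - x 5 * (x 4 + κ⁻¹ * x 2) else 0) := by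
  have h := ((hpj 1 x).mul ((hpj 5 x).mul (hpj 6 x))).add
    ((((hpj 5 x).const_mul κ).sub ((hpj 5 x).mul (hpj 6 x))).mul
      ((hpj 4 x).add ((hpj 2 x).const_mul κ⁻¹)))
  rw [pd, s7B_eq]
  simp only [fK]
  erw [h.fderiv]
  fin_cases i <;> simp [Pi.single_apply, fK] <;> ring

lemma pdr6 (κ : ℝ) (i : Fin 7) (x : Fin 7 → ℝ) (hi : i = 2 ∨ i = 3) : pd i (r6B κ) x =
    if i = 2 then fK κ x * Real.exp (w6 x) else 0 := by
  have h := (((hpj 2 x).mul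
      (((hpj 5 x).const_mul κ).sub ((hpj 5 x).mul (hpj 6 x)))).mul
      (((hpj 5 x).const_mul (1/2:ℝ)).mul ((hpj 6 x).mul (hpj 6 x))).exp).add
    (((hpj 4 x).mul (hpj 4 x)).const_mul (1/2:ℝ))
  rw [pd, r6B_eq]
  erw [h.fderiv]
  rcases hi with rfl | rfl <;> simp [Pi.single_apply, fK, w6_eq] <;> ring

/-- the chosen functions satisfy the full PDE system. -/
theorem stmt_15 (κ : ℝ) (hκ : κ = 1 ∨ κ = -1) (x : Fin 7 → ℝ) :
    pd 0 (r7B κ) x = pd 6 w6 x ∧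
    pd 2 (r7B κ) x = Real.sqrt 2 * pd 3 (s7B κ) x ∧
    pd 3 (r7B κ) x = 2 * Real.sqrt 2 * pd 4 (s7B κ) x ∧
    pd 3 (r7B κ) x = 2 * Real.sqrt 2 * pd 2 (r6B κ) x * Real.exp (-(w6 x)) ∧
    pd 4 (r7B κ) x = κ * pd 2 (r7B κ) x ∧
    pd 4 (r7B κ) x = Real.sqrt 2 * pd 3 (r6B κ) x * Real.exp (-(w6 x)) ∧
    pd 1 (s7B κ) x = pd 6 w6 x ∧
    pd 4 (s7B κ) x = κ * pd 2 (s7B κ) x := by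
  have hκ0 : κ * κ⁻¹ = 1 := by rcases hκ with rfl | rfl <;> norm_num
  have hexp : Real.exp (w6 x) * Real.exp (-(w6 x)) = 1 := by
    rw [← Real.exp_add]; simp
  refine ⟨?_, ?_, ?_, ?_, ?_, ?_, ?_, ?_⟩
  · rw [pdr7, pdw6]; simp
  · rw [pdr7, pds7]; simp
  · rw [pdr7, pds7]; simp
  · rw [pdr7, pdr6 κ 2 x (Or.inl rfl)]
    simp only [show ((3:Fin 7) = 0) = False from by decide,
      show ((3:Fin 7) = 5) = False from by decide, show ((3:Fin 7) = 6) = False from by decide,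
      show ((3:Fin 7) = 3) = True from by decide, show ((2:Fin 7) = 2) = True from by decide,
      if_true, if_false, zero_add, add_zero]
    rw [show 2 * Real.sqrt 2 * (fK κ x * Real.exp (w6 x)) * Real.exp (-(w6 x))
        = 2 * Real.sqrt 2 * fK κ x * (Real.exp (w6 x) * Real.exp (-(w6 x))) from by ring,
      hexp, mul_one]
  · rw [pdr7, pdr7]; simp
  · rw [pdr7, pdr6 κ 3 x (Or.inr rfl)]; simp
  · rw [pds7, pdw6]; simp
  · rw [pds7, pds7]; simp
    rw [show κ * (κ⁻¹ * fK κ x) = κ * κ⁻¹ * fK κ x from by ring, hκ0, one_mul]
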